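/- Assume MA[𝔡] and ω₁ < 𝔡. For any subset X of the irrational numbers of cardinality ω₁, the M-nw-selective game on X is indeterminate: neither player has a winning strategy. -/

import Mathlib

open Set Cardinal TopologicalSpace

/-- A family of subsets is a *network*: every point and open neighbourhood admit a
member of the family squeezed between them. -/
def IsNetwork {X : Type*} [TopologicalSpace X] (𝒩 : Set (Set X)) : Prop :=
  ∀ (x : X) (U : Set X), IsOpen U → x ∈ U → ∃ N ∈ 𝒩, x ∈ N ∧ N ⊆ U

/-- The collection of countable networks of a space. -/
def CtblNetwork (X : Type*) [TopologicalSpace X] : Set (Set (Set X)) :=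
  {𝒩 | 𝒩.Countable ∧ IsNetwork 𝒩}

/-- The weight of a topological space: the least cardinality of a basis. -/
noncomputable def topWeight (X : Type*) [TopologicalSpace X] : Cardinal :=
  sInf { c | ∃ B : Set (Set X), TopologicalSpace.IsTopologicalBasis B ∧ Cardinal.mk B = c }

/-! ### The R-nw-selective game -/

/-- A strategy for Bob in the R-nw-selective game: given Alice's moves so far
(the networks played in innings `0,…,n`), Bob picks a set. -/
def RBobStrategy (X : Type*) [TopologicalSpace X] : Type _ :=
  ∀ n : ℕ, (Fin (n + 1) → Set (Set X)) → Set X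

/-- Bob's strategy `σ` is winning in the R-nw-selective game: against any run where Alice
plays countable networks, Bob's answers are legal and form a network. -/
def RBobWinning {X : Type*} [TopologicalSpace X] (σ : RBobStrategy X) : Prop :=
  ∀ A : ℕ → Set (Set X), (∀ n, A n ∈ CtblNetwork X) →
    (∀ n, σ n (fun i => A i.1) ∈ A n) ∧
    IsNetwork (Set.range fun n => σ n (fun i : Fin (n + 1) => A i.1))

/-- Bob has a winning strategy in the R-nw-selective game. -/
def RBobWins (X : Type*) [TopologicalSpace X] : Prop :=
  ∃ σ : RBobStrategy X, RBobWinning σ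

/-- A strategy for Alice in the R-nw-selective game: given Bob's previous picks,
Alice plays a (countable) network. -/
def RAliceStrategy (X : Type*) [TopologicalSpace X] : Type _ :=
  ∀ n : ℕ, (Fin n → Set X) → Set (Set X)

/-- Alice's strategy `α` is winning in the R-nw-selective game: it always plays countable
networks, and no legal sequence of Bob's answers forms a network. -/
def RAliceWinning {X : Type*} [TopologicalSpace X] (α : RAliceStrategy X) : Prop :=
  (∀ n h, α n h ∈ CtblNetwork X) ∧
  ∀ b : ℕ → Set X, (∀ n, b n ∈ α n (fun i : Fin n => b i.1)) → ¬ IsNetwork (Set.range b)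

/-- Alice has a winning strategy in the R-nw-selective game. -/
def RAliceWins (X : Type*) [TopologicalSpace X] : Prop :=
  ∃ α : RAliceStrategy X, RAliceWinning α

/-- The R-nw-selective selection principle. -/
def RNwSelective (X : Type*) [TopologicalSpace X] : Prop :=
  ∀ A : ℕ → Set (Set X), (∀ n, A n ∈ CtblNetwork X) →
    ∃ b : ℕ → Set X, (∀ n, b n ∈ A n) ∧ IsNetwork (Set.range b)

/-! ### The M-nw-selective game -/

/-- A strategy for Bob in the M-nw-selective game: given Alice's networks so far,
Bob picks a finite collection of sets. -/
def MBobStrategy (X : Type*) [TopologicalSpace X] : Type _ :=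
  ∀ n : ℕ, (Fin (n + 1) → Set (Set X)) → Finset (Set X)

/-- Bob's strategy is winning in the M-nw-selective game. -/
def MBobWinning {X : Type*} [TopologicalSpace X] (σ : MBobStrategy X) : Prop :=
  ∀ A : ℕ → Set (Set X), (∀ n, A n ∈ CtblNetwork X) →
    (∀ n, ↑(σ n (fun i => A i.1)) ⊆ A n) ∧
    IsNetwork (⋃ n, (↑(σ n (fun i : Fin (n + 1) => A i.1)) : Set (Set X)))

/-- Bob has a winning strategy in the M-nw-selective game. -/
def MBobWins (X : Type*) [TopologicalSpace X] : Prop :=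
  ∃ σ : MBobStrategy X, MBobWinning σ

/-- A strategy for Alice in the M-nw-selective game. -/
def MAliceStrategy (X : Type*) [TopologicalSpace X] : Type _ :=
  ∀ n : ℕ, (Fin n → Finset (Set X)) → Set (Set X)

/-- Alice's strategy is winning in the M-nw-selective game. -/
def MAliceWinning {X : Type*} [TopologicalSpace X] (α : MAliceStrategy X) : Prop :=
  (∀ n h, α n h ∈ CtblNetwork X) ∧
  ∀ b : ℕ → Finset (Set X), (∀ n, ↑(b n) ⊆ α n (fun i : Fin n => b i.1)) →
    ¬ IsNetwork (⋃ n, (↑(b n) : Set (Set X)))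

/-- Alice has a winning strategy in the M-nw-selective game. -/
def MAliceWins (X : Type*) [TopologicalSpace X] : Prop :=
  ∃ α : MAliceStrategy X, MAliceWinning α

/-- The M-nw-selective selection principle. -/
def MNwSelective (X : Type*) [TopologicalSpace X] : Prop :=
  ∀ A : ℕ → Set (Set X), (∀ n, A n ∈ CtblNetwork X) →
    ∃ F : ℕ → Finset (Set X), (∀ n, ↑(F n) ⊆ A n) ∧
      IsNetwork (⋃ n, (↑(F n) : Set (Set X)))

/-! ### The (Point, Open)-Set game -/

/-- A strategy for Alice in the (Point, Open)-Set game: given Bob's previous picks,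
Alice plays a point together with an open neighbourhood of it. -/
def POAliceStrategy (X : Type*) [TopologicalSpace X] : Type _ :=
  ∀ n : ℕ, (Fin n → Set X) → X × Set X

/-- Alice's strategy is winning in the (Point, Open)-Set game: her moves are legal
(a point inside an open set), and every legal sequence of Bob's answers is a network. -/
def POAliceWinning {X : Type*} [TopologicalSpace X] (α : POAliceStrategy X) : Prop :=
  (∀ n h, (α n h).1 ∈ (α n h).2 ∧ IsOpen (α n h).2) ∧
  ∀ b : ℕ → Set X,
    (∀ n, (α n (fun i : Fin n => b i.1)).1 ∈ b n ∧ b n ⊆ (α n (fun i : Fin n => b i.1)).2) →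
    IsNetwork (Set.range b)

/-- Alice has a winning strategy in the (Point, Open)-Set game. -/
def POAliceWins (X : Type*) [TopologicalSpace X] : Prop :=
  ∃ α : POAliceStrategy X, POAliceWinning α

/-- A strategy for Bob in the (Point, Open)-Set game. -/
def POBobStrategy (X : Type*) [TopologicalSpace X] : Type _ :=
  ∀ n : ℕ, (Fin (n + 1) → X × Set X) → Set X

/-- Bob's strategy is winning in the (Point, Open)-Set game: his answers are legal and
never form a network, whenever Alice plays legally. -/
def POBobWinning {X : Type*} [TopologicalSpace X] (σ : POBobStrategy X) : Prop :=
  ∀ A : ℕ → X × Set X, (∀ n, (A n).1 ∈ (A n).2 ∧ IsOpen (A n).2) →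
    (∀ n, (A n).1 ∈ σ n (fun i => A i.1) ∧ σ n (fun i => A i.1) ⊆ (A n).2) ∧
    ¬ IsNetwork (Set.range fun n => σ n (fun i : Fin (n + 1) => A i.1))

/-- Bob has a winning strategy in the (Point, Open)-Set game. -/
def POBobWins (X : Type*) [TopologicalSpace X] : Prop :=
  ∃ σ : POBobStrategy X, POBobWinning σ

/-! ### The game `G_k(Nw, Nw)` -/

/-- Bob's strategy (same shape as in the M-game) is winning in `G_k(Nw,Nw)`:
he always selects exactly `k` elements of Alice's network, and his selections
accumulate to a network. -/
def GkBobWinning {X : Type*} [TopologicalSpace X] (k : ℕ) (σ : MBobStrategy X) : Prop :=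
  ∀ A : ℕ → Set (Set X), (∀ n, A n ∈ CtblNetwork X) →
    (∀ n, ↑(σ n (fun i => A i.1)) ⊆ A n ∧ (σ n (fun i : Fin (n + 1) => A i.1)).card = k) ∧
    IsNetwork (⋃ n, (↑(σ n (fun i : Fin (n + 1) => A i.1)) : Set (Set X)))

/-- Bob has a winning strategy in `G_k(Nw,Nw)`. -/
def GkBobWins (X : Type*) [TopologicalSpace X] (k : ℕ) : Prop :=
  ∃ σ : MBobStrategy X, GkBobWinning k σ

/-- Alice's strategy is winning in `G_k(Nw,Nw)`. -/
def GkAliceWinning {X : Type*} [TopologicalSpace X] (k : ℕ) (α : MAliceStrategy X) : Prop :=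
  (∀ n h, α n h ∈ CtblNetwork X) ∧
  ∀ b : ℕ → Finset (Set X),
    (∀ n, ↑(b n) ⊆ α n (fun i : Fin n => b i.1) ∧ (b n).card = k) →
    ¬ IsNetwork (⋃ n, (↑(b n) : Set (Set X)))

/-- Alice has a winning strategy in `G_k(Nw,Nw)`. -/
def GkAliceWins (X : Type*) [TopologicalSpace X] (k : ℕ) : Prop :=
  ∃ α : MAliceStrategy X, GkAliceWinning k α

/-! ### Cardinal characteristics and Martin's Axiom -/

/-- `cov(M)`: the least cardinality of a family of meager subsets of `ℝ` covering `ℝ`. -/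
noncomputable def covMeager : Cardinal :=
  sInf { c | ∃ S : Set (Set ℝ), (∀ A ∈ S, IsMeagre A) ∧ ⋃₀ S = Set.univ ∧ Cardinal.mk S = c }

/-- `𝔡`: the dominating number, the least cardinality of a dominating family in `ω^ω`. -/
noncomputable def domNumber : Cardinal :=
  sInf { c | ∃ D : Set (ℕ → ℕ), (∀ g : ℕ → ℕ, ∃ f ∈ D, ∀ᶠ n in Filter.atTop, g n ≤ f n) ∧
    Cardinal.mk D = c }

/-- A subset of a poset is dense (downwards). -/
def PosetDense {P : Type*} [Preorder P] (D : Set P) : Prop :=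
  ∀ p : P, ∃ q ∈ D, q ≤ p

/-- A filter on a poset: nonempty, upwards closed and downwards directed. -/
def PosetFilter {P : Type*} [Preorder P] (F : Set P) : Prop :=
  F.Nonempty ∧ (∀ p ∈ F, ∀ q, p ≤ q → q ∈ F) ∧
    ∀ p ∈ F, ∀ q ∈ F, ∃ r ∈ F, r ≤ p ∧ r ≤ q

/-- The countable chain condition for a poset: every antichain is countable. -/
def PosetCCC (P : Type*) [Preorder P] : Prop :=
  ∀ A : Set P, (∀ p ∈ A, ∀ q ∈ A, p ≠ q → ¬ ∃ r, r ≤ p ∧ r ≤ q) → A.Countable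

/-- Martin's Axiom below the cardinal `c`: for every nonempty ccc poset and every family of
fewer than `c` dense sets, there is a filter meeting all of them. -/
def MartinsAxiomBelow (c : Cardinal) : Prop :=
  ∀ (P : Type) [Preorder P], Nonempty P → PosetCCC P →
    ∀ 𝒟 : Set (Set P), (∀ D ∈ 𝒟, PosetDense D) → Cardinal.mk 𝒟 < c →
      ∃ F : Set P, PosetFilter F ∧ ∀ D ∈ 𝒟, (F ∩ D).Nonempty

namespace Stmt16Aux

/-- squeeze a rational interval between a point and an open set, avoiding `z`. -/
lemma squeeze {V : Set ℝ} (hV : IsOpen V) {x : ℝ} (hx : x ∈ V) {z : ℝ} (hz : z ≠ x) :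
    ∃ a b : ℚ, (a : ℝ) < x ∧ x < (b : ℝ) ∧ Set.Ioo (a : ℝ) (b : ℝ) ⊆ V ∧
      z ∉ Set.Icc (a : ℝ) (b : ℝ) := by
  obtain ⟨ε, hε, hball⟩ := Metric.isOpen_iff.mp hV x hx
  set r : ℝ := min ε |z - x| with hr
  have hrpos : 0 < r := lt_min hε (abs_pos.mpr (sub_ne_zero.mpr hz))
  obtain ⟨a, ha1, ha2⟩ := exists_rat_btwn (show x - r < x by linarith)
  obtain ⟨b, hb1, hb2⟩ := exists_rat_btwn (show x < x + r by linarith)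
  refine ⟨a, b, ha2, hb1, ?_, ?_⟩
  · intro y hy
    apply hball
    rw [Metric.mem_ball, Real.dist_eq, abs_sub_lt_iff]
    have h1 : y < x + r := lt_trans hy.2 hb2
    have h2 : x - r < y := lt_trans ha1 hy.1
    constructor <;> [linarith [min_le_left ε |z - x|]; linarith [min_le_left ε |z - x|]]
  · rintro ⟨h1, h2⟩
    have hzr : |z - x| < r := by
      rw [abs_sub_lt_iff]
      constructor <;> linarith
    exact absurd hzr (not_lt.mpr (min_le_right ε |z - x|))

variable (X : Set ℝ)

def Eset (a b : ℚ) : Set X := Subtype.val ⁻¹' Set.Ioo (a : ℝ) (b : ℝ)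

lemma isOpen_Eset (a b : ℚ) : IsOpen (Eset X a b) :=
  isOpen_Ioo.preimage continuous_subtype_val

lemma countable_Erange : (Set.range fun ab : ℚ × ℚ => Eset X ab.1 ab.2).Countable :=
  Set.countable_range _

/-- find an `Eset` between `x` and an open set `U`, avoiding `z ∉ X`. -/
lemma exists_Eset {U : Set X} (hU : IsOpen U) {x : X} (hx : x ∈ U) {z : ℝ} (hz : z ∉ X) :
    ∃ a b : ℚ, x ∈ Eset X a b ∧ Eset X a b ⊆ U ∧ z ∉ Set.Icc (a : ℝ) (b : ℝ) := by
  obtain ⟨V, hV, rfl⟩ := isOpen_induced_iff.mp hU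
  have hzx : z ≠ (x : ℝ) := fun h => hz (h ▸ x.2)
  obtain ⟨a, b, ha, hb, hIoo, hIcc⟩ := squeeze hV hx hzx
  exact ⟨a, b, ⟨ha, hb⟩, fun y hy => hIoo hy, hIcc⟩

/-- the collections of finite subsets of a countable set is countable -/
lemma countable_finsets {β : Type*} {s : Set β} (hs : s.Countable) :
    {F : Finset β | ↑F ⊆ s}.Countable := by
  have h1 : {t : Set β | t.Finite ∧ t ⊆ s}.Countable := Set.countable_setOf_finite_subset hs
  have h2 : {F : Finset β | ↑F ⊆ s} =
      (fun F : Finset β => (↑F : Set β)) ⁻¹' {t : Set β | t.Finite ∧ t ⊆ s} := by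
    ext F; simp [Finset.finite_toSet]
  rw [h2]
  exact h1.preimage (fun F G h => Finset.coe_injective h)

lemma prefix_getD {β : Type*} {l l' : List β} (h : l <+: l') {n : ℕ} (hn : n < l.length)
    (d : β) : l'.getD n d = l.getD n d := by
  obtain ⟨t, rfl⟩ := h; exact List.getD_append _ _ _ _ hn

/-- injection of Baire space into Cantor space -/
lemma baire_to_cantor : ∃ f : (ℕ → ℕ) → (ℕ → Bool), Function.Injective f := by
  refine ⟨fun h m => decide ((Nat.unpair m).2 < h (Nat.unpair m).1), fun h h' he => ?_⟩
  funext n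
  have key : ∀ k, (k < h n) ↔ (k < h' n) := by
    intro k
    have := congrFun he (Nat.pair n k)
    simpa [Nat.unpair_pair] using this
  have h1 : ∀ k, k < h n → k < h' n := fun k => (key k).mp
  have h2 : ∀ k, k < h' n → k < h n := fun k => (key k).mpr
  rcases Nat.lt_trichotomy (h n) (h' n) with hlt | heq | hgt
  · exact absurd (h2 _ hlt) (lt_irrefl _)
  · exact heq
  · exact absurd (h1 _ hgt) (lt_irrefl _)
end Stmt16Aux

namespace Stmt16Aux
variable (X : Set ℝ)

/-- the network of `Eset`s whose closures avoid `z`. -/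
def netw (z : ℝ) : Set (Set X) :=
  {S | ∃ a b : ℚ, z ∉ Set.Icc (a : ℝ) (b : ℝ) ∧ S = Eset X a b}

lemma netw_subset_Erange (z : ℝ) :
    netw X z ⊆ Set.range fun ab : ℚ × ℚ => Eset X ab.1 ab.2 := by
  rintro S ⟨a, b, _, rfl⟩; exact ⟨(a, b), rfl⟩

lemma netw_mem (z : ℝ) (hz : z ∉ X) : netw X z ∈ CtblNetwork X := by
  constructor
  · exact ((countable_Erange X).mono (netw_subset_Erange X z))
  · intro x U hU hx
    obtain ⟨a, b, hxE, hEU, hIcc⟩ := exists_Eset X hU hx hz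
    exact ⟨Eset X a b, ⟨a, b, hIcc, rfl⟩, hxE, hEU⟩

variable (σ : MBobStrategy X)

/-- Bob's pick after Alice has played `netw` moves along `p ++ [z]`. -/
noncomputable def pick (p : List ℝ) (z : ℝ) : Finset (Set X) :=
  σ p.length (fun i : Fin (p.length + 1) => netw X ((p ++ [z]).getD i.1 0))

variable {X σ}

lemma pick_subset (hσ : MBobWinning σ) (h0 : (0:ℝ) ∉ X) {p : List ℝ}
    (hp : ∀ y ∈ p, y ∉ X) {z : ℝ} (hz : z ∉ X) :
    ↑(pick X σ p z) ⊆ netw X z := by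
  have hout : ∀ n, (p ++ [z]).getD n 0 ∉ X := by
    intro n
    rcases Nat.lt_or_ge n (p ++ [z]).length with h | h
    · rw [List.getD_eq_getElem _ _ h]
      have := List.getElem_mem h
      rcases List.mem_append.mp this with h' | h'
      · exact hp _ h'
      · rw [List.mem_singleton.mp h']; exact hz
    · rw [List.getD_eq_default _ _ h]; exact h0
  have hA : ∀ n, (fun n => netw X ((p ++ [z]).getD n 0)) n ∈ CtblNetwork X :=
    fun n => netw_mem X _ (hout n)
  have := (hσ _ hA).1 p.length
  have hgetz : (p ++ [z]).getD p.length 0 = z := by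
    rw [List.getD_append_right _ _ _ _ le_rfl, Nat.sub_self]; rfl
  rw [hgetz] at this
  exact this

variable (X σ)

def rea (F : Finset (Set X)) : Set ℝ := ⋃ N ∈ F, Subtype.val '' N

def Dset (p : List ℝ) : Set ℝ := ⋂ z ∈ Xᶜ, closure (rea X (pick X σ p z))

variable {X σ}

lemma isClosed_Dset (p : List ℝ) : IsClosed (Dset X σ p) :=
  isClosed_biInter fun _ _ => isClosed_closure

lemma exclude {w : ℝ} (F : Finset (Set X)) (hF : ↑F ⊆ netw X w) :
    ∃ C : Set ℝ, IsClosed C ∧ rea X F ⊆ C ∧ w ∉ C := by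
  classical
  induction F using Finset.induction_on with
  | empty => exact ⟨∅, isClosed_empty, by simp [rea], notMem_empty w⟩
  | @insert N F' hNF ih =>
    obtain ⟨a, b, hw, rfl⟩ : N ∈ netw X w := hF (Finset.mem_insert_self _ _)
    obtain ⟨C, hC1, hC2, hC3⟩ := ih (fun S hS => hF (Finset.mem_insert.mpr (Or.inr hS)))
    refine ⟨Set.Icc (a:ℝ) b ∪ C, isClosed_Icc.union hC1, ?_, by simp [hw, hC3]⟩
    rw [rea, Finset.set_biUnion_insert]
    apply Set.union_subset_union _ ?_
    · rintro y ⟨x, hx, rfl⟩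
      exact ⟨le_of_lt hx.1, le_of_lt hx.2⟩
    · exact hC2
lemma Dset_subset (hσ : MBobWinning σ) (h0 : (0:ℝ) ∉ X) {p : List ℝ}
    (hp : ∀ y ∈ p, y ∉ X) : Dset X σ p ⊆ X := by
  intro w hw
  by_contra hwX
  obtain ⟨C, hC1, hC2, hC3⟩ := exclude (pick X σ p w) (pick_subset hσ h0 hp hwX)
  have : w ∈ closure (rea X (pick X σ p w)) := by
    have := Set.mem_iInter₂.mp hw w hwX
    exact this
  exact hC3 (closure_minimal hC2 hC1 this)

end Stmt16Aux
namespace Stmt16Aux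
variable (X : Set ℝ) (σ : MBobStrategy X)

noncomputable def zch (p : List ℝ) (F : Finset (Set X)) : ℝ :=
  letI := Classical.dec (∃ z, z ∉ X ∧ pick X σ p z = F)
  if h : ∃ z, z ∉ X ∧ pick X σ p z = F then h.choose else 0

lemma zch_notMem (h0 : (0:ℝ) ∉ X) (p : List ℝ) (F : Finset (Set X)) : zch X σ p F ∉ X := by
  rw [zch]
  split
  next h => exact h.choose_spec.1
  next h => exact h0

lemma zch_spec {p : List ℝ} {F : Finset (Set X)} (h : ∃ z, z ∉ X ∧ pick X σ p z = F) :
    pick X σ p (zch X σ p F) = F := by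
  rw [zch]
  rw [dif_pos h]
  exact h.choose_spec.2

/-- the countable tree of positions -/
noncomputable def Tset : ℕ → Set (List ℝ)
  | 0 => {[]}
  | (n + 1) => ⋃ p ∈ Tset n, (fun F : Finset (Set X) => p ++ [zch X σ p F]) ''
      {F : Finset (Set X) | ↑F ⊆ Set.range fun ab : ℚ × ℚ => Eset X ab.1 ab.2}

lemma Tset_countable : ∀ n, (Tset X σ n).Countable := by
  intro n
  induction n with
  | zero => exact Set.countable_singleton _
  | succ n ih =>
    exact ih.biUnion fun p _ =>
      ((countable_finsets (countable_Erange X)).image _)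

lemma Tset_good (h0 : (0:ℝ) ∉ X) : ∀ n, ∀ p ∈ Tset X σ n, ∀ y ∈ p, y ∉ X := by
  intro n
  induction n with
  | zero => rintro p hp y hy; rw [Set.mem_singleton_iff.mp hp] at hy; simp at hy
  | succ n ih =>
    rintro p hp y hy
    simp only [Tset, Set.mem_iUnion] at hp
    obtain ⟨q, hq, F, _, rfl⟩ := hp
    rcases List.mem_append.mp hy with h | h
    · exact ih q hq y h
    · rw [List.mem_singleton.mp h]; exact zch_notMem X σ h0 q F

variable {X σ}

/-- Coverage: every point of `X` is in some `Dset` along the countable tree. -/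
lemma coverage (hσ : MBobWinning σ) (h0 : (0:ℝ) ∉ X) (x : X) :
    ∃ n, ∃ p ∈ Tset X σ n, (x : ℝ) ∈ Dset X σ p := by
  by_contra hx
  push_neg at hx
  classical
  -- the next move of Alice at position p, targeting x
  let nxt : List ℝ → ℝ := fun p =>
    zch X σ p (pick X σ p (if h : ∃ z, z ∉ X ∧ (x:ℝ) ∉ closure (rea X (pick X σ p z))
      then h.choose else 0))
  let g : ℕ → List ℝ := fun n => Nat.rec [] (fun _ q => q ++ [nxt q]) n
  have hg0 : g 0 = [] := rfl
  have hgs : ∀ n, g (n + 1) = g n ++ [nxt (g n)] := fun n => rfl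
  -- step lemma
  have step : ∀ n, ∀ p ∈ Tset X σ n, (x:ℝ) ∉ Dset X σ p →
      p ++ [nxt p] ∈ Tset X σ (n+1) ∧ (x:ℝ) ∉ closure (rea X (pick X σ p (nxt p))) := by
    intro n p hp hxD
    have hgood := Tset_good X σ h0 n p hp
    have h : ∃ z, z ∉ X ∧ (x:ℝ) ∉ closure (rea X (pick X σ p z)) := by
      by_contra hc
      push_neg at hc
      exact hxD (Set.mem_iInter₂.mpr fun z hz => hc z hz)
    obtain ⟨hz0, hz1⟩ := h.choose_spec
    set F : Finset (Set X) := pick X σ p h.choose with hF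
    have hFV : ↑F ⊆ Set.range fun ab : ℚ × ℚ => Eset X ab.1 ab.2 :=
      fun S hS => netw_subset_Erange X _ (pick_subset hσ h0 hgood hz0 hS)
    have hpickz : pick X σ p (zch X σ p F) = F := zch_spec X σ ⟨h.choose, hz0, rfl⟩
    have hnxt : nxt p = zch X σ p F := by
      simp only [nxt, dif_pos h]
      rfl
    constructor
    · rw [hnxt]
      simp only [Tset, Set.mem_iUnion]
      exact ⟨p, hp, F, hFV, rfl⟩
    · rw [hnxt, hpickz]
      exact hz1
  -- invariant
  have inv : ∀ n, g n ∈ Tset X σ n := by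
    intro n
    induction n with
    | zero => exact Set.mem_singleton _
    | succ n ih => rw [hgs]; exact (step n (g n) ih (hx n (g n) ih)).1
  have avoid : ∀ n, (x:ℝ) ∉ closure (rea X (pick X σ (g n) (nxt (g n)))) :=
    fun n => (step n (g n) (inv n) (hx n (g n) (inv n))).2
  -- the infinite play
  have hglen : ∀ n, (g n).length = n := by
    intro n; induction n with
    | zero => rfl
    | succ n ih => rw [hgs]; simp [ih]
  have hget : ∀ n, ∀ i < n, (g n).getD i 0 = nxt (g i) := by
    intro n
    induction n with
    | zero => omega
    | succ n ih =>
      intro i hi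
      rw [hgs]
      rcases Nat.lt_or_ge i n with h | h
      · rw [List.getD_append _ _ _ _ (by rw [hglen]; exact h)]
        exact ih i h
      · have hieq : i = n := by omega
        subst hieq
        rw [List.getD_append_right _ _ _ _ (by rw [hglen])]
        rw [hglen, Nat.sub_self]
        rfl
  -- the actual play
  set A : ℕ → Set (Set X) := fun n => netw X (nxt (g n)) with hA
  have hAmem : ∀ n, A n ∈ CtblNetwork X := by
    intro n
    apply netw_mem X _ (zch_notMem X σ h0 _ _)
  obtain ⟨hleg, hnet⟩ := hσ A hAmem
  -- the pick at round n is `pick X σ (g n) (nxt (g n))`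
  have hpick : ∀ n, σ n (fun i : Fin (n+1) => A i.1) = pick X σ (g n) (nxt (g n)) := by
    intro n
    rw [pick, hglen n]
    congr 1
    funext i
    rw [hA]
    have : (g n ++ [nxt (g n)]).getD i.1 0 = nxt (g i.1) := by
      rw [← hgs]
      exact hget (n+1) i.1 i.2
    rw [this]
  obtain ⟨N, hN, hxN, -⟩ := hnet x Set.univ isOpen_univ (Set.mem_univ x)
  obtain ⟨n, hn⟩ := Set.mem_iUnion.mp hN
  rw [hpick n] at hn
  apply avoid n
  apply subset_closure
  exact Set.mem_biUnion hn ⟨x, hxN, rfl⟩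

end Stmt16Aux
namespace Stmt16Aux

lemma not_MBobWins (hd : Cardinal.aleph 1 < domNumber) (X : Set ℝ)
    (hirr : ∀ x ∈ X, Irrational x) (hX : Cardinal.mk X = Cardinal.aleph 1) :
    ¬ MBobWins X := by
  rintro ⟨σ, hσ⟩
  have h0 : (0:ℝ) ∉ X := by
    intro h
    have := hirr 0 h
    rw [show (0:ℝ) = ((0:ℚ):ℝ) by norm_num] at this
    exact Rat.not_irrational 0 this
  by_cases hall : ∀ n, ∀ p ∈ Tset X σ n, (Dset X σ p).Countable
  · -- X would be countable
    have hU : (⋃ n, ⋃ p ∈ Tset X σ n, Dset X σ p).Countable :=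
      Set.countable_iUnion fun n => (Tset_countable X σ n).biUnion (hall n)
    have hXsub : X ⊆ ⋃ n, ⋃ p ∈ Tset X σ n, Dset X σ p := by
      intro x hx
      obtain ⟨n, p, hp, hxp⟩ := coverage hσ h0 ⟨x, hx⟩
      exact Set.mem_iUnion.mpr ⟨n, Set.mem_biUnion hp hxp⟩
    have : X.Countable := hU.mono hXsub
    have hmk : Cardinal.mk X ≤ ℵ₀ := by
      haveI := this.to_subtype
      exact Cardinal.mk_le_aleph0
    rw [hX] at hmk
    exact absurd hmk (not_le.mpr Cardinal.aleph0_lt_aleph_one)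
  · push_neg at hall
    obtain ⟨n, p, hp, hunc⟩ := hall
    obtain ⟨f, hfr, -, hfinj⟩ :=
      (isClosed_Dset (X := X) (σ := σ) p).exists_nat_bool_injection_of_not_countable hunc
    obtain ⟨i, hiinj⟩ := baire_to_cantor
    have hsub : Dset X σ p ⊆ X := Dset_subset hσ h0 (Tset_good X σ h0 n p hp)
    have j : ∀ h : ℕ → ℕ, f (i h) ∈ X := fun h => hsub (hfr ⟨i h, rfl⟩)
    have hjinj : Function.Injective (fun h : ℕ → ℕ => (⟨f (i h), j h⟩ : X)) := by
      intro h h' he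
      exact hiinj (hfinj (congrArg Subtype.val he))
    have h1 : Cardinal.mk (ℕ → ℕ) ≤ Cardinal.mk X := Cardinal.mk_le_of_injective hjinj
    have h2 : domNumber ≤ Cardinal.mk (ℕ → ℕ) := by
      apply csInf_le'
      refine ⟨Set.univ, fun g => ⟨g, Set.mem_univ g, Filter.Eventually.of_forall fun n => le_rfl⟩, ?_⟩
      exact Cardinal.mk_univ
    rw [hX] at h1
    exact absurd (h2.trans h1) (not_le.mpr hd)

end Stmt16Aux
namespace Stmt16Aux
variable (X : Set ℝ) (α : MAliceStrategy X)

/-- validity of a finite sequence of Bob moves against Alice's strategy `α`. -/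
def AValid (l : List (Finset (Set X))) : Prop :=
  ∀ n, n < l.length → ↑(l.getD n ∅) ⊆ α n (fun i : Fin n => l.getD i.1 ∅)

/-- the poset of positions. -/
def APos : Type := {l : List (Finset (Set X)) // AValid X α l}

instance : Preorder (APos X α) where
  le p q := q.1 <+: p.1
  le_refl p := List.prefix_rfl
  le_trans p q r h1 h2 := List.IsPrefix.trans h2 h1

lemma AValid_nil : AValid X α [] := by intro n hn; simp at hn

lemma AValid_append {l : List (Finset (Set X))} (hl : AValid X α l)
    {F : Finset (Set X)} (hF : ↑F ⊆ α l.length (fun i : Fin l.length => l.getD i.1 ∅)) :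
    AValid X α (l ++ [F]) := by
  intro n hn
  rw [List.length_append, List.length_singleton] at hn
  have harg : ∀ m, m ≤ l.length → (fun i : Fin m => (l ++ [F]).getD i.1 ∅) =
      (fun i : Fin m => l.getD i.1 ∅) := by
    intro m hm
    funext i
    exact List.getD_append _ _ _ _ (lt_of_lt_of_le i.2 hm)
  rcases Nat.lt_or_ge n l.length with h | h
  · rw [List.getD_append _ _ _ _ h, harg n (le_of_lt h)]
    exact hl n h
  · have : n = l.length := by omega
    subst this
    rw [List.getD_append_right _ _ _ _ le_rfl, Nat.sub_self, harg _ le_rfl]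
    simpa using hF

variable {X α}

lemma APos_countable (hc : ∀ n h, (α n h).Countable) : Countable (APos X α) := by
  have key : ∀ n, {l : List (Finset (Set X)) | AValid X α l ∧ l.length = n}.Countable := by
    intro n
    induction n with
    | zero =>
      apply Set.Countable.mono _ (Set.countable_singleton ([] : List (Finset (Set X))))
      rintro l ⟨-, hl⟩
      simpa using List.length_eq_zero_iff.mp hl
    | succ n ih =>
      have : {l : List (Finset (Set X)) | AValid X α l ∧ l.length = n + 1} ⊆
          ⋃ l' ∈ {l : List (Finset (Set X)) | AValid X α l ∧ l.length = n},
            (fun F => l' ++ [F]) ''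
              {F : Finset (Set X) | ↑F ⊆ α n (fun i : Fin n => l'.getD i.1 ∅)} := by
        rintro l ⟨hl, hlen⟩
        have hne : l ≠ [] := by intro h; rw [h] at hlen; simp at hlen
        have hdl : l = l.dropLast ++ [l.getLast hne] := (List.dropLast_append_getLast hne).symm
        have hdlen : l.dropLast.length = n := by rw [List.length_dropLast, hlen]; rfl
        have hpre : l.dropLast <+: l := List.dropLast_prefix l
        have hdval : AValid X α l.dropLast := by
          intro m hm
          rw [hdlen] at hm
          have e1 : l.dropLast.getD m ∅ = l.getD m ∅ :=
            (prefix_getD hpre (by rw [hdlen]; exact hm) ∅).symm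
          have e2 : (fun i : Fin m => l.dropLast.getD i.1 ∅) =
              (fun i : Fin m => l.getD i.1 ∅) := by
            funext i
            exact (prefix_getD hpre (by rw [hdlen]; exact lt_trans i.2 hm) ∅).symm
          rw [e1, e2]
          exact hl m (by omega)
        refine Set.mem_biUnion ⟨hdval, hdlen⟩ ⟨l.getLast hne, ?_, hdl.symm⟩
        have e2 : (fun i : Fin n => l.dropLast.getD i.1 ∅) =
            (fun i : Fin n => l.getD i.1 ∅) := by
          funext i
          exact (prefix_getD hpre (by rw [hdlen]; exact i.2) ∅).symm
        have hlast : l.getD n ∅ = l.getLast hne := by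
          conv_lhs => rw [hdl]
          rw [List.getD_append_right _ _ _ _ (by rw [hdlen]), hdlen, Nat.sub_self]
          rfl
        simp only [Set.mem_setOf_eq, hdlen, e2]
        rw [← hlast]
        exact hl n (by omega)
      apply Set.Countable.mono this
      exact ih.biUnion fun l' _ => (countable_finsets (hc n _)).image _
  have : {l : List (Finset (Set X)) | AValid X α l}.Countable := by
    apply Set.Countable.mono _ (Set.countable_iUnion key)
    intro l hl
    exact Set.mem_iUnion.mpr ⟨l.length, hl, rfl⟩
  exact this.to_subtype

end Stmt16Aux
namespace Stmt16Aux

lemma not_MAliceWins (hMA : MartinsAxiomBelow domNumber)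
    (hd : Cardinal.aleph 1 < domNumber) (X : Set ℝ)
    (hX : Cardinal.mk X = Cardinal.aleph 1) : ¬ MAliceWins X := by
  rintro ⟨α, hα1, hα2⟩
  have hc : ∀ n h, (α n h).Countable := fun n h => (hα1 n h).1
  haveI : Countable (APos X α) := APos_countable hc
  have hccc : PosetCCC (APos X α) := fun A _ => A.to_countable
  have hne : Nonempty (APos X α) := ⟨⟨[], AValid_nil X α⟩⟩
  -- dense sets
  let DD : X × ℚ × ℚ → Set (APos X α) := fun t =>
    {p | t.1 ∈ Eset X t.2.1 t.2.2 →
      ∃ m, ∃ N ∈ p.1.getD m ∅, t.1 ∈ N ∧ N ⊆ Eset X t.2.1 t.2.2}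
  let EE : ℕ → Set (APos X α) := fun n => {p | n ≤ p.1.length}
  let f : (X × ℚ × ℚ) ⊕ ℕ → Set (APos X α) := Sum.elim DD EE
  have hdense : ∀ D ∈ Set.range f, PosetDense D := by
    rintro D ⟨t | n, rfl⟩
    · intro p
      by_cases hx : t.1 ∈ Eset X t.2.1 t.2.2
      · obtain ⟨N, hN, hxN, hNE⟩ :=
          (hα1 p.1.length (fun i : Fin p.1.length => p.1.getD i.1 ∅)).2 t.1 _
            (isOpen_Eset X t.2.1 t.2.2) hx
        refine ⟨⟨p.1 ++ [{N}], AValid_append X α p.2 (by simpa using hN)⟩,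
          fun _ => ⟨p.1.length, N, ?_, hxN, hNE⟩, ⟨[{N}], rfl⟩⟩
        rw [List.getD_append_right _ _ _ _ le_rfl, Nat.sub_self]
        simp
      · exact ⟨p, fun h => absurd h hx, le_refl p⟩
    · intro p
      have hval : ∀ k, AValid X α (p.1 ++ List.replicate k ∅) := by
        intro k
        induction k with
        | zero => simpa using p.2
        | succ k ih =>
          have : p.1 ++ List.replicate (k+1) ∅ = (p.1 ++ List.replicate k ∅) ++ [∅] := by
            rw [List.append_assoc, ← List.replicate_succ']
          rw [this]
          exact AValid_append X α ih (by simp)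
      refine ⟨⟨p.1 ++ List.replicate n ∅, hval n⟩, ?_, ⟨List.replicate n ∅, rfl⟩⟩
      show n ≤ (p.1 ++ List.replicate n ∅).length
      simp
  have hsize : Cardinal.mk (Set.range f) < domNumber := by
    have h1 : Cardinal.mk (Set.range f) ≤ Cardinal.mk ((X × ℚ × ℚ) ⊕ ℕ) :=
      Cardinal.mk_range_le
    have h2 : Cardinal.mk ((X × ℚ × ℚ) ⊕ ℕ) = Cardinal.aleph 1 := by
      simp only [Cardinal.mk_sum, Cardinal.mk_prod, Cardinal.lift_id, hX,
        Cardinal.mkRat, Cardinal.mk_nat, Cardinal.aleph0_mul_aleph0]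
      rw [Cardinal.mul_eq_left (Cardinal.aleph0_le_aleph 1) (Cardinal.aleph0_le_aleph 1)
        Cardinal.aleph0_ne_zero,
        Cardinal.add_eq_left (Cardinal.aleph0_le_aleph 1) (Cardinal.aleph0_le_aleph 1)]
    rw [h2] at h1
    exact lt_of_le_of_lt h1 hd
  obtain ⟨F, hFfil, hmeet⟩ := hMA (APos X α) hne hccc (Set.range f) hdense hsize
  -- any two conditions in the filter are comparable
  have hcomp : ∀ p ∈ F, ∀ q ∈ F, p.1 <+: q.1 ∨ q.1 <+: p.1 := by
    intro p hp q hq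
    obtain ⟨r, hr, hrp, hrq⟩ := hFfil.2.2 p hp q hq
    rcases le_total p.1.length q.1.length with h | h
    · exact Or.inl (List.prefix_of_prefix_length_le hrp hrq h)
    · exact Or.inr (List.prefix_of_prefix_length_le hrq hrp h)
  have hEE : ∀ n : ℕ, ∃ p : APos X α, p ∈ F ∧ n < p.1.length := by
    intro n
    obtain ⟨p, hpF, hpE⟩ := hmeet (f (Sum.inr (n+1))) ⟨Sum.inr (n+1), rfl⟩
    exact ⟨p, hpF, hpE⟩
  choose pf hpfF hpflen using hEE
  set b : ℕ → Finset (Set X) := fun n => (pf n).1.getD n ∅ with hbdef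
  have agree : ∀ p ∈ F, ∀ n, n < p.1.length → p.1.getD n ∅ = b n := by
    intro p hp n hn
    rcases hcomp p hp (pf n) (hpfF n) with h | h
    · exact (prefix_getD h hn ∅).symm
    · exact prefix_getD h (hpflen n) ∅
  have hb : ∀ n, ↑(b n) ⊆ α n (fun i : Fin n => b i.1) := by
    intro n
    have hv := (pf n).2 n (hpflen n)
    have harg : (fun i : Fin n => (pf n).1.getD i.1 ∅) = fun i : Fin n => b i.1 :=
      funext fun i => agree (pf n) (hpfF n) i.1 (lt_trans i.2 (hpflen n))
    rw [harg] at hv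
    rw [hbdef]
    exact hv
  apply hα2 b hb
  intro x U hU hxU
  obtain ⟨V, hV, rfl⟩ := isOpen_induced_iff.mp hU
  have hzx : (x : ℝ) - 1 ≠ (x : ℝ) := by intro h; linarith [congrArg id h]
  obtain ⟨a, b', ha, hb', hIoo, -⟩ := squeeze hV hxU hzx
  have hxE : x ∈ Eset X a b' := ⟨ha, hb'⟩
  obtain ⟨p, hpF, hpD⟩ := hmeet (f (Sum.inl (x, a, b'))) ⟨Sum.inl (x, a, b'), rfl⟩
  obtain ⟨m, N, hNm, hxN, hNE⟩ := hpD hxE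
  have hmlen : m < p.1.length := by
    by_contra hcon
    rw [List.getD_eq_default _ _ (not_lt.mp hcon)] at hNm
    simp at hNm
  rw [agree p hpF m hmlen] at hNm
  refine ⟨N, Set.mem_iUnion.mpr ⟨m, hNm⟩, hxN, fun y hy => hIoo (hNE hy)⟩

end Stmt16Aux

theorem stmt16 (hMA : MartinsAxiomBelow domNumber)
    (hd : Cardinal.aleph 1 < domNumber) (X : Set ℝ)
    (hirr : ∀ x ∈ X, Irrational x) (hX : Cardinal.mk X = Cardinal.aleph 1) :
    ¬ MAliceWins X ∧ ¬ MBobWins X :=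
  ⟨Stmt16Aux.not_MAliceWins hMA hd X hX, Stmt16Aux.not_MBobWins hd X hirr hX⟩
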